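/- Let p, q be primes with q dividing (p^p-1)/(p-1), and let M in GL_p(F_p) have order q. An element A of the normaliser of ⟨M⟩ in GL_p(F_p) has order q if and only if A = M^r for some r with 1 ≤ r ≤ q - 1. -/

import Mathlib

lemma aux_not_dvd_p (p q : ℕ) (hp : p.Prime) (hq : q.Prime)
    (hdvd : q ∣ ∑ i ∈ Finset.range p, p ^ i) : ¬ q ∣ p := by
  intro h
  have hqp : q = p := ((Nat.prime_dvd_prime_iff_eq hq hp).mp h)
  subst hqp
  have h1 : (∑ i ∈ Finset.range q, q ^ i) % q = 1 % q := by
    rw [Finset.sum_nat_mod, Finset.sum_eq_single 0]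
    · simp
    · intro b _ hb
      simp [Nat.pow_mod, Nat.zero_pow (Nat.pos_of_ne_zero hb)]
    · simp [hq.pos]
  obtain ⟨c, hc⟩ := hdvd
  rw [hc, Nat.mul_mod_right, Nat.mod_eq_of_lt hq.one_lt] at h1
  exact absurd h1 (by norm_num)

lemma aux_dvd_pow_sub_one (p q : ℕ) (hp : p.Prime)
    (hdvd : q ∣ ∑ i ∈ Finset.range p, p ^ i) : q ∣ p ^ p - 1 := by
  have h : (∑ i ∈ Finset.range p, p ^ i) * (p - 1) = p ^ p - 1 := by
    have h1 : (1:ℕ) ≤ p := hp.one_lt.le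
    have h2 : (1:ℕ) ≤ p ^ p := Nat.one_le_pow _ _ hp.pos
    zify [h1, h2]
    exact geom_sum_mul (p : ℤ) p
  exact h ▸ Dvd.dvd.mul_right hdvd _

lemma aux_not_dvd_pow_sub_one (p q : ℕ) (hp : p.Prime) (hq : q.Prime)
    (hdvd : q ∣ ∑ i ∈ Finset.range p, p ^ i) :
    ∀ k, 0 < k → k < p → ¬ q ∣ p ^ k - 1 := by
  haveI : Fact q.Prime := ⟨hq⟩
  have hnd : ¬ q ∣ p := aux_not_dvd_p p q hp hq hdvd
  have hcop : Nat.Coprime p q := (Nat.coprime_primes hp hq).mpr (fun h => hnd (h ▸ dvd_rfl))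
  set u : (ZMod q)ˣ := ZMod.unitOfCoprime p hcop with hu
  have hucoe : (u : ZMod q) = (p : ℕ) := ZMod.coe_unitOfCoprime p hcop
  have hppow : ((p : ZMod q)) ^ p = 1 := by
    have h1 : (1:ℕ) ≤ p ^ p := Nat.one_le_pow _ _ hp.pos
    have := (ZMod.natCast_eq_zero_iff (p ^ p - 1) q).mpr
      (aux_dvd_pow_sub_one p q hp hdvd)
    rw [Nat.cast_sub h1] at this
    push_cast at this
    linear_combination this
  have hup : u ^ p = 1 := by
    ext
    push_cast [hucoe]
    exact hppow
  have hordp : orderOf u = p := by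
    rcases (Nat.dvd_prime hp).mp (orderOf_dvd_of_pow_eq_one hup) with h1 | h1
    · exfalso
      have hu1 : u = 1 := orderOf_eq_one_iff.mp h1
      have hp1 : ((p : ℕ) : ZMod q) = 1 := by rw [← hucoe, hu1]; rfl
      have hsum : ((∑ i ∈ Finset.range p, p ^ i : ℕ) : ZMod q) = 0 :=
        (ZMod.natCast_eq_zero_iff _ q).mpr hdvd
      push_cast [hp1] at hsum
      simp at hsum
      exact hnd ((ZMod.natCast_eq_zero_iff p q).mp (by rw [hsum]))
    · exact h1
  intro k hk0 hkp hdvdk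
  have h1 : (1:ℕ) ≤ p ^ k := Nat.one_le_pow _ _ hp.pos
  have hpk : ((p : ZMod q)) ^ k = 1 := by
    have := (ZMod.natCast_eq_zero_iff (p ^ k - 1) q).mpr hdvdk
    rw [Nat.cast_sub h1] at this
    push_cast at this
    linear_combination this
  have huk : u ^ k = 1 := by
    ext
    push_cast [hucoe]
    exact hpk
  have := hordp ▸ orderOf_dvd_of_pow_eq_one huk
  exact absurd (Nat.le_of_dvd hk0 this) (not_le.mpr hkp)

lemma aux_factorization (p q : ℕ) (hp : p.Prime) (hq : q.Prime)
    (hdvd : q ∣ ∑ i ∈ Finset.range p, p ^ i) :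
    (∏ i : Fin p, (p ^ p - p ^ (i : ℕ))).factorization q
      = (p ^ p - 1).factorization q := by
  have hnd1 := aux_not_dvd_pow_sub_one p q hp hq hdvd
  have hndp := aux_not_dvd_p p q hp hq hdvd
  have hfac : ∀ i < p, p ^ p - p ^ i = p ^ i * (p ^ (p - i) - 1) := by
    intro i hi
    rw [Nat.mul_sub, mul_one, ← pow_add, Nat.add_sub_cancel' hi.le]
  have hpos : ∀ i ∈ Finset.range p, p ^ p - p ^ i ≠ 0 := by
    intro i hi
    have : p ^ i < p ^ p := Nat.pow_lt_pow_right hp.one_lt (Finset.mem_range.mp hi)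
    omega
  have hconv : ∏ i : Fin p, (p ^ p - p ^ (i : ℕ)) = ∏ i ∈ Finset.range p, (p ^ p - p ^ i) :=
    Fin.prod_univ_eq_prod_range (fun i => p ^ p - p ^ i) p
  rw [hconv, Nat.factorization_prod hpos]
  rw [Finset.sum_apply']
  rw [Finset.sum_eq_single_of_mem 0 (Finset.mem_range.mpr hp.pos)]
  · simp
  · intro i hi hi0
    have hip : i < p := Finset.mem_range.mp hi
    apply Nat.factorization_eq_zero_of_not_dvd
    rw [hfac i hip]
    intro hdq
    rcases (Nat.Prime.dvd_mul hq).mp hdq with h | h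
    · exact hndp (hq.dvd_of_dvd_pow h)
    · exact hnd1 (p - i) (by omega) (by omega) h

lemma aux_cyclic_sylow (p q : ℕ) (hp : p.Prime) (hq : q.Prime)
    (hfac : (Nat.card (GL (Fin p) (ZMod p))).factorization q = (p ^ p - 1).factorization q) :
    ∃ P : Sylow q (GL (Fin p) (ZMod p)), IsCyclic P := by
  haveI : Fact p.Prime := ⟨hp⟩
  haveI : Fact q.Prime := ⟨hq⟩
  set K := GaloisField p p with hK
  have hfr : Module.finrank (ZMod p) K = p := GaloisField.finrank p hp.pos.ne'
  let b : Module.Basis (Fin p) (ZMod p) K := Module.finBasisOfFinrankEq (ZMod p) K hfr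
  let φ : K →ₐ[ZMod p] Matrix (Fin p) (Fin p) (ZMod p) :=
    (LinearMap.toMatrixAlgEquiv b).toAlgHom.comp (Algebra.lmul (ZMod p) K)
  have hinj : Function.Injective φ := RingHom.injective φ.toRingHom
  let f : Kˣ →* GL (Fin p) (ZMod p) := Units.map φ.toMonoidHom
  have hfinj : Function.Injective f := Units.map_injective hinj
  -- the Sylow q-subgroup of Kˣ
  obtain ⟨T⟩ : Nonempty (Sylow q Kˣ) := inferInstance
  have hcardK : Nat.card Kˣ = p ^ p - 1 := by
    rw [Nat.card_units, GaloisField.card p p hp.pos.ne']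
  have hcardT : Nat.card T = q ^ (p ^ p - 1).factorization q := by
    rw [T.card_eq_multiplicity, hcardK]
  -- push into GL
  let S : Subgroup (GL (Fin p) (ZMod p)) := Subgroup.map f T.toSubgroup
  have hcardS : Nat.card S = q ^ (Nat.card (GL (Fin p) (ZMod p))).factorization q := by
    rw [hfac, ← hcardT]
    exact (Nat.card_congr (Subgroup.equivMapOfInjective T.toSubgroup f hfinj).toEquiv).symm
  refine ⟨Sylow.ofCard S hcardS, ?_⟩
  have : IsCyclic T.toSubgroup := Subgroup.isCyclic _
  exact isCyclic_of_surjective _ (Subgroup.equivMapOfInjective T.toSubgroup f hfinj).surjective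

lemma aux_mem_zpowers {H : Type*} [Group H] [Finite H] [IsCyclic H] {q : ℕ}
    (hq : 0 < q) {x y : H} (hx : orderOf x = q) (hy : y ^ q = 1) :
    y ∈ Subgroup.zpowers x := by
  classical
  haveI : Fintype H := Fintype.ofFinite H
  set s : Finset H := Finset.univ.filter (fun a => a ^ q = 1) with hs
  have hcard_s : s.card ≤ q := IsCyclic.card_pow_eq_one_le hq
  set t : Finset H := (Subgroup.zpowers x : Set H).toFinset with ht
  have hcard_t : t.card = q := by
    have h := Nat.card_zpowers x
    rw [hx] at h
    rw [ht, Set.toFinset_card, ← Nat.card_eq_fintype_card]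
    exact h
  have hsub : t ⊆ s := by
    intro z hz
    rw [ht, Set.mem_toFinset] at hz
    obtain ⟨k, hk⟩ := hz
    rw [hs, Finset.mem_filter]
    refine ⟨Finset.mem_univ _, ?_⟩
    rw [← hk, ← zpow_natCast, ← zpow_mul, mul_comm, zpow_mul, zpow_natCast, ← hx,
      pow_orderOf_eq_one, one_zpow]
  have heq : t = s := Finset.eq_of_subset_of_card_le hsub (by omega)
  have : y ∈ s := Finset.mem_filter.mpr ⟨Finset.mem_univ _, hy⟩
  rw [← heq, ht, Set.mem_toFinset] at this
  exact this

lemma aux_commute {G : Type*} [Group G] {q : ℕ} (hq : q.Prime) (M A : G)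
    (hM : orderOf M = q) (hA : orderOf A = q)
    (hmem : A ∈ Subgroup.normalizer (Subgroup.zpowers M)) : Commute A M := by
  haveI : Fact q.Prime := ⟨hq⟩
  rw [Subgroup.mem_normalizer_iff] at hmem
  obtain ⟨k, hk⟩ : A * M * A⁻¹ ∈ Subgroup.zpowers M :=
    (hmem M).mp (Subgroup.mem_zpowers M)
  have hconj : ∀ (m : ℤ), A * M ^ m * A⁻¹ = M ^ (k * m) := by
    intro m
    have h1 : A * M ^ m * A⁻¹ = (MulAut.conj A) (M ^ m) := by
      simp [MulAut.conj_apply, mul_assoc]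
    have h2 : (MulAut.conj A) (M ^ m) = ((MulAut.conj A) M) ^ m := map_zpow _ _ _
    have h3 : (MulAut.conj A) M = M ^ k := by
      simp only [MulAut.conj_apply]
      rw [← hk]
    rw [h1, h2, h3, ← zpow_mul, mul_comm]
  have key : ∀ n : ℕ, A ^ n * M * (A ^ n)⁻¹ = M ^ (k ^ n) := by
    intro n
    induction n with
    | zero => simp
    | succ n ih =>
      have hstep : A ^ (n + 1) * M * (A ^ (n + 1))⁻¹ = A * (A ^ n * M * (A ^ n)⁻¹) * A⁻¹ := by
        group
      rw [hstep, ih, hconj, ← pow_succ']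
  have hq1 : M = M ^ (k ^ q) := by
    have hAq : A ^ q = 1 := hA ▸ pow_orderOf_eq_one A
    have h := key q
    rw [hAq, one_mul, inv_one, mul_one] at h
    exact h
  have hdvd1 : (q : ℤ) ∣ k ^ q - 1 := by
    have h := (orderOf_dvd_iff_zpow_eq_one (x := M) (i := k ^ q - 1)).mpr
      (by rw [zpow_sub, zpow_one, ← hq1]; exact mul_inv_cancel M)
    rwa [hM] at h
  have hdvd2 : (q : ℤ) ∣ k - 1 := by
    have h1 : ((k : ZMod q)) ^ q = 1 := by
      have := (ZMod.intCast_zmod_eq_zero_iff_dvd (k ^ q - 1) q).mpr hdvd1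
      push_cast at this
      linear_combination this
    have h2 : ((k : ZMod q)) ^ q = (k : ZMod q) := ZMod.pow_card _
    have : ((k - 1 : ℤ) : ZMod q) = 0 := by
      push_cast
      rw [← h2, h1]
      ring
    exact (ZMod.intCast_zmod_eq_zero_iff_dvd _ q).mp this
  have hMk : M ^ k = M := by
    obtain ⟨t, ht⟩ := hdvd2
    have hk1 : k = 1 + q * t := by omega
    rw [hk1, zpow_add, zpow_one, zpow_mul, zpow_natCast, ← hM, pow_orderOf_eq_one, one_zpow,
      mul_one]
  have : A * M * A⁻¹ = M := by rw [← hk]; exact hMk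
  exact mul_inv_eq_iff_eq_mul.mp this

theorem stmt_12 (p q : ℕ) (hp : p.Prime) (hq : q.Prime)
    (hdvd : q ∣ ∑ i ∈ Finset.range p, p ^ i)
    (M : GL (Fin p) (ZMod p)) (hM : orderOf M = q)
    (A : GL (Fin p) (ZMod p)) (hA : A ∈ Subgroup.normalizer (Subgroup.zpowers M)) :
    orderOf A = q ↔ ∃ r : ℕ, 1 ≤ r ∧ r ≤ q - 1 ∧ A = M ^ r := by
  haveI : Fact q.Prime := ⟨hq⟩
  haveI : Fact p.Prime := ⟨hp⟩
  constructor
  · intro hAq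
    have hcomm : Commute A M := aux_commute hq M A hM hAq hA
    -- the subgroup generated by M and A is a q-group
    let φ : (Subgroup.zpowers M) × (Subgroup.zpowers A) →* GL (Fin p) (ZMod p) :=
      MonoidHom.mk' (fun z => (z.1 : GL (Fin p) (ZMod p)) * (z.2 : GL (Fin p) (ZMod p))) (by
        rintro ⟨⟨a, i, rfl⟩, ⟨b, j, rfl⟩⟩ ⟨⟨c, i', rfl⟩, ⟨d, j', rfl⟩⟩
        have hcb : Commute (M ^ i') (A ^ j) := (hcomm.symm.zpow_zpow i' j).symm.symm
        simp only [Subgroup.coe_mul]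
        calc (M ^ i * M ^ i') * (A ^ j * A ^ j')
            = M ^ i * (M ^ i' * A ^ j) * A ^ j' := by group
          _ = M ^ i * (A ^ j * M ^ i') * A ^ j' := by rw [hcb.eq]
          _ = (M ^ i * A ^ j) * (M ^ i' * A ^ j') := by group)
    have hpg : IsPGroup q ((Subgroup.zpowers M) × (Subgroup.zpowers A)) := by
      apply IsPGroup.of_card (n := 2)
      rw [Nat.card_prod, Nat.card_zpowers, Nat.card_zpowers, hM, hAq, sq]
    have hpr : IsPGroup q φ.range :=
      hpg.of_surjective φ.rangeRestrict φ.rangeRestrict_surjective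
    obtain ⟨Q, hQ⟩ := hpr.exists_le_sylow
    have hMQ : M ∈ Q := hQ ⟨(⟨M, Subgroup.mem_zpowers M⟩, 1), by simp [φ]⟩
    have hAQ : A ∈ Q := hQ ⟨(1, ⟨A, Subgroup.mem_zpowers A⟩), by simp [φ]⟩
    -- Q is cyclic
    have hcardG : (Nat.card (GL (Fin p) (ZMod p))).factorization q
        = (p ^ p - 1).factorization q := by
      rw [Matrix.card_GL_field, ZMod.card]
      exact aux_factorization p q hp hq hdvd
    obtain ⟨P0, hP0⟩ := aux_cyclic_sylow p q hp hq hcardG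
    haveI : IsCyclic Q := isCyclic_of_surjective _ (Sylow.equiv P0 Q).surjective
    -- use the cyclic lemma
    set x : Q := ⟨M, hMQ⟩ with hx
    set y : Q := ⟨A, hAQ⟩ with hy
    have hox : orderOf x = q :=
      ((orderOf_injective Q.toSubgroup.subtype Subtype.coe_injective x).symm).trans hM
    have hoy : y ^ q = 1 := by
      have hAq1 : A ^ q = 1 := hAq ▸ pow_orderOf_eq_one A
      exact Subtype.ext (by simpa using hAq1)
    obtain ⟨k, hk⟩ := aux_mem_zpowers hq.pos hox hoy
    have hMA : M ^ k = A := by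
      have := congrArg (Subtype.val) hk
      simpa using this
    -- reduce the exponent mod q
    have hMq : M ^ (q : ℤ) = 1 := by
      rw [zpow_natCast, ← hM, pow_orderOf_eq_one]
    have hsplit : M ^ k = M ^ (k % q) := by
      conv_lhs => rw [← Int.emod_add_mul_ediv k q]
      rw [zpow_add, zpow_mul, hMq, one_zpow, mul_one]
    have hnonneg : 0 ≤ k % q := Int.emod_nonneg k (by exact_mod_cast hq.pos.ne')
    have hlt : k % q < q := Int.emod_lt_of_pos k (by exact_mod_cast hq.pos)
    refine ⟨(k % q).toNat, ?_, ?_, ?_⟩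
    · by_contra h
      have h0 : (k % q).toNat = 0 := by omega
      have : A = 1 := by
        rw [← hMA, hsplit, ← Int.toNat_of_nonneg hnonneg, h0]
        simp
      rw [this, orderOf_one] at hAq
      exact hq.one_lt.ne' hAq.symm
    · omega
    · rw [← hMA, hsplit]
      conv_lhs => rw [← Int.toNat_of_nonneg hnonneg]
      rw [zpow_natCast]
  · rintro ⟨r, hr1, hr2, rfl⟩
    have hrq : r < q := by have := hq.one_lt; omega
    have hcop : (orderOf M).gcd r = 1 := by
      rw [hM]
      exact Nat.Coprime.gcd_eq_one (hq.coprime_iff_not_dvd.mpr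
        (fun h => absurd (Nat.le_of_dvd (by omega) h) (not_le.mpr hrq)))
    rw [orderOf_pow' M (by omega), hcop, hM, Nat.div_one]
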